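/- arXiv:1705.07817 — 9 statements merged into one kernel-verified Lean document; each statement's English description precedes it below -/
import Mathlib

section
/- Let N, L ∈ ℕ, samples (x_ℓ, y_ℓ) ∈ ℝ^N × ℝ for ℓ = 1,…,L, λ ≥ 0, C ⊆ ℝ^{N×N} any subset, and ‖·‖ any norm on ℝ^N. Then the infimum over (v, Θ) ∈ ℝ^N × C of F(v, Θ) + (λ/2)‖Θ‖_1 + λ Σ_{i=1}^N max{|v_i|, ‖Θ_{i,·}‖} equals the infimum over all (v⁺, v⁻, Θ) with v⁺, v⁻ ∈ ℝ^N componentwise nonnegative, Θ ∈ C, and ‖Θ_{i,·}‖ ≤ v⁺_i + v⁻_i for all i, of F(v⁺ − v⁻, Θ) + (λ/2)‖Θ‖_1 + λ Σ_{i=1}^N (v⁺_i + v⁻_i). -/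
/-- The quadratic-interaction least-squares fit
`F(v, Θ) = ½ ∑ₗ (yₗ − xₗᵀ v − xₗᵀ Θ xₗ)²`. -/
noncomputable def lsFit (N L : ℕ) (x : Fin L → Fin N → ℝ) (y : Fin L → ℝ)
    (v : Fin N → ℝ) (Θ : Fin N → Fin N → ℝ) : ℝ :=
  (1 / 2) * ∑ ℓ, (y ℓ - ∑ i, x ℓ i * v i - ∑ i, ∑ j, x ℓ i * Θ i j * x ℓ j) ^ 2

lemma lsFit_nonneg (N L : ℕ) (x : Fin L → Fin N → ℝ) (y : Fin L → ℝ)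
    (v : Fin N → ℝ) (Θ : Fin N → Fin N → ℝ) : 0 ≤ lsFit N L x y v Θ := by
  unfold lsFit
  positivity

/-- Proposition 1: the infimum of the hierarchical-interaction objective over
`ℝ^N × C` equals the infimum of its epigraphical reformulation. -/
theorem stmt_3 (N L : ℕ) (x : Fin L → Fin N → ℝ) (y : Fin L → ℝ)
    (lam : ℝ) (hlam : 0 ≤ lam) (C : Set (Fin N → Fin N → ℝ))
    (nrm : Seminorm ℝ (Fin N → ℝ)) (hdef : ∀ u, nrm u = 0 → u = 0) :
    sInf {r : ℝ | ∃ v : Fin N → ℝ, ∃ Θ : Fin N → Fin N → ℝ, Θ ∈ C ∧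
        r = lsFit N L x y v Θ + (lam / 2) * (∑ i, ∑ j, |Θ i j|) +
          lam * ∑ i, max |v i| (nrm (Θ i))} =
    sInf {r : ℝ | ∃ vp vm : Fin N → ℝ, ∃ Θ : Fin N → Fin N → ℝ,
        (∀ i, 0 ≤ vp i) ∧ (∀ i, 0 ≤ vm i) ∧ Θ ∈ C ∧
        (∀ i, nrm (Θ i) ≤ vp i + vm i) ∧
        r = lsFit N L x y (fun i => vp i - vm i) Θ + (lam / 2) * (∑ i, ∑ j, |Θ i j|) +
          lam * ∑ i, (vp i + vm i)} := by
  set A := {r : ℝ | ∃ v : Fin N → ℝ, ∃ Θ : Fin N → Fin N → ℝ, Θ ∈ C ∧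
        r = lsFit N L x y v Θ + (lam / 2) * (∑ i, ∑ j, |Θ i j|) +
          lam * ∑ i, max |v i| (nrm (Θ i))} with hA
  set B := {r : ℝ | ∃ vp vm : Fin N → ℝ, ∃ Θ : Fin N → Fin N → ℝ,
        (∀ i, 0 ≤ vp i) ∧ (∀ i, 0 ≤ vm i) ∧ Θ ∈ C ∧
        (∀ i, nrm (Θ i) ≤ vp i + vm i) ∧
        r = lsFit N L x y (fun i => vp i - vm i) Θ + (lam / 2) * (∑ i, ∑ j, |Θ i j|) +
          lam * ∑ i, (vp i + vm i)} with hB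
  -- lower bounds
  have hAbd : ∀ r ∈ A, (0:ℝ) ≤ r := by
    rintro r ⟨v, Θ, hΘ, rfl⟩
    have h1 := lsFit_nonneg N L x y v Θ
    have h2 : (0:ℝ) ≤ ∑ i, ∑ j, |Θ i j| := by positivity
    have h3 : (0:ℝ) ≤ ∑ i, max |v i| (nrm (Θ i)) :=
      Finset.sum_nonneg fun i _ => le_trans (abs_nonneg _) (le_max_left _ _)
    have : (0:ℝ) ≤ lam / 2 := by linarith
    nlinarith
  have hBbd : ∀ r ∈ B, (0:ℝ) ≤ r := by
    rintro r ⟨vp, vm, Θ, hvp, hvm, hΘ, hle, rfl⟩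
    have h1 := lsFit_nonneg N L x y (fun i => vp i - vm i) Θ
    have h2 : (0:ℝ) ≤ ∑ i, ∑ j, |Θ i j| := by positivity
    have h3 : (0:ℝ) ≤ ∑ i, (vp i + vm i) :=
      Finset.sum_nonneg fun i _ => by have := hvp i; have := hvm i; linarith
    have : (0:ℝ) ≤ lam / 2 := by linarith
    nlinarith
  -- A ⊆ B
  have hsub : A ⊆ B := by
    rintro r ⟨v, Θ, hΘ, rfl⟩
    refine ⟨fun i => (max |v i| (nrm (Θ i)) + v i) / 2,
            fun i => (max |v i| (nrm (Θ i)) - v i) / 2, Θ, ?_, ?_, hΘ, ?_, ?_⟩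
    · intro i
      have : |v i| ≤ max |v i| (nrm (Θ i)) := le_max_left _ _
      have := neg_abs_le (v i); linarith
    · intro i
      have : |v i| ≤ max |v i| (nrm (Θ i)) := le_max_left _ _
      have := le_abs_self (v i); linarith
    · intro i
      have : nrm (Θ i) ≤ max |v i| (nrm (Θ i)) := le_max_right _ _
      linarith
    · have hv : (fun i => (max |v i| (nrm (Θ i)) + v i) / 2 -
          (max |v i| (nrm (Θ i)) - v i) / 2) = v := by
        funext i; ring
      rw [hv]
      congr 1
      refine congrArg (lam * ·) (Finset.sum_congr rfl fun i _ => ?_)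
      ring
  -- cases on emptiness
  rcases C.eq_empty_or_nonempty with hC | ⟨Θ₀, hΘ₀⟩
  · have hAe : A = ∅ := by
      ext r; simp only [hA, Set.mem_setOf_eq, Set.mem_empty_iff_false, iff_false]
      rintro ⟨v, Θ, hΘ, _⟩; rw [hC] at hΘ; exact hΘ
    have hBe : B = ∅ := by
      ext r; simp only [hB, Set.mem_setOf_eq, Set.mem_empty_iff_false, iff_false]
      rintro ⟨vp, vm, Θ, _, _, hΘ, _⟩; rw [hC] at hΘ; exact hΘ
    rw [hAe, hBe]
  · have hAne : A.Nonempty := ⟨_, ⟨0, Θ₀, hΘ₀, rfl⟩⟩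
    have hBne : B.Nonempty := ⟨_, hsub hAne.choose_spec⟩
    have hAbdd : BddBelow A := ⟨0, fun r hr => hAbd r hr⟩
    have hBbdd : BddBelow B := ⟨0, fun r hr => hBbd r hr⟩
    apply le_antisymm
    · -- sInf A ≤ sInf B : every b ∈ B dominates some a ∈ A
      apply le_csInf hBne
      rintro b ⟨vp, vm, Θ, hvp, hvm, hΘ, hle, rfl⟩
      have hmem : lsFit N L x y (fun i => vp i - vm i) Θ +
          (lam / 2) * (∑ i, ∑ j, |Θ i j|) +
          lam * ∑ i, max |(vp i - vm i)| (nrm (Θ i)) ∈ A :=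
        ⟨fun i => vp i - vm i, Θ, hΘ, rfl⟩
      refine le_trans (csInf_le hAbdd hmem) ?_
      have : ∑ i, max |(vp i - vm i)| (nrm (Θ i)) ≤ ∑ i, (vp i + vm i) := by
        apply Finset.sum_le_sum
        intro i _
        apply max_le _ (hle i)
        rw [abs_le]
        constructor <;> [have := hvp i; have := hvm i] <;>
          (have := hvp i; have := hvm i; linarith)
      nlinarith
    · exact csInf_le_csInf hBbdd hAne hsub
end

section
/- Let N, L ∈ ℕ, samples (x_ℓ, y_ℓ) ∈ ℝ^N × ℝ, λ ≥ 0, C ⊆ ℝ^{N×N}, and ‖·‖ any norm on ℝ^N. If (v̂⁺, v̂⁻, Θ̂) is a global minimizer of F(v⁺ − v⁻, Θ) + (λ/2)‖Θ‖_1 + λ Σ_{i=1}^N (v⁺_i + v⁻_i) over the set of (v⁺, v⁻, Θ) with v⁺, v⁻ componentwise nonnegative, Θ ∈ C, and ‖Θ_{i,·}‖ ≤ v⁺_i + v⁻_i for all i, then (v̂⁺ − v̂⁻, Θ̂) is a global minimizer of F(v, Θ) + (λ/2)‖Θ‖_1 + λ Σ_{i=1}^N max{|v_i|, ‖Θ_{i,·}‖}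 over ℝ^N × C. -/
/-- Minimizer-transfer direction of Proposition 1: a global minimizer of the
epigraphical formulation yields a global minimizer `(v̂⁺ − v̂⁻, Θ̂)` of the original
hierarchical-interaction problem over `ℝ^N × C`. -/
theorem stmt_4 (N L : ℕ) (x : Fin L → Fin N → ℝ) (y : Fin L → ℝ)
    (lam : ℝ) (hlam : 0 ≤ lam) (C : Set (Fin N → Fin N → ℝ))
    (nrm : Seminorm ℝ (Fin N → ℝ)) (hdef : ∀ u, nrm u = 0 → u = 0)
    (vph vmh : Fin N → ℝ) (Θh : Fin N → Fin N → ℝ)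
    (hvp : ∀ i, 0 ≤ vph i) (hvm : ∀ i, 0 ≤ vmh i) (hΘ : Θh ∈ C)
    (hrow : ∀ i, nrm (Θh i) ≤ vph i + vmh i)
    (hmin : ∀ (vp vm : Fin N → ℝ) (Θ : Fin N → Fin N → ℝ),
      (∀ i, 0 ≤ vp i) → (∀ i, 0 ≤ vm i) → Θ ∈ C → (∀ i, nrm (Θ i) ≤ vp i + vm i) →
      lsFit N L x y (fun i => vph i - vmh i) Θh + (lam / 2) * (∑ i, ∑ j, |Θh i j|) +
          lam * ∑ i, (vph i + vmh i) ≤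
        lsFit N L x y (fun i => vp i - vm i) Θ + (lam / 2) * (∑ i, ∑ j, |Θ i j|) +
          lam * ∑ i, (vp i + vm i)) :
    ∀ (v : Fin N → ℝ) (Θ : Fin N → Fin N → ℝ), Θ ∈ C →
      lsFit N L x y (fun i => vph i - vmh i) Θh + (lam / 2) * (∑ i, ∑ j, |Θh i j|) +
          lam * ∑ i, max |vph i - vmh i| (nrm (Θh i)) ≤
        lsFit N L x y v Θ + (lam / 2) * (∑ i, ∑ j, |Θ i j|) +
          lam * ∑ i, max |v i| (nrm (Θ i)) := by
  intro v Θ hΘC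
  set s : Fin N → ℝ := fun i => max |v i| (nrm (Θ i)) with hs
  have habs : ∀ i, |v i| ≤ s i := fun i => le_max_left _ _
  have hnrm : ∀ i, nrm (Θ i) ≤ s i := fun i => le_max_right _ _
  have key := hmin (fun i => (s i + v i) / 2) (fun i => (s i - v i) / 2) Θ
    (fun i => by have := (abs_le.mp (habs i)).1; linarith)
    (fun i => by have := (abs_le.mp (habs i)).2; linarith)
    hΘC
    (fun i => by have := hnrm i; show nrm (Θ i) ≤ (s i + v i) / 2 + (s i - v i) / 2; linarith)
  have hsum : (∑ i, ((s i + v i) / 2 + (s i - v i) / 2)) = ∑ i, s i := by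
    apply Finset.sum_congr rfl; intro i _; ring
  have hdiff : (fun i => (s i + v i) / 2 - (s i - v i) / 2) = v := by
    funext i; ring
  rw [hsum, hdiff] at key
  refine le_trans ?_ key
  have h1 : (∑ i, max |vph i - vmh i| (nrm (Θh i))) ≤ ∑ i, (vph i + vmh i) := by
    apply Finset.sum_le_sum
    intro i _
    apply max_le
    · have := hvp i; have := hvm i
      rw [abs_le]; constructor <;> linarith
    · exact hrow i
  have := mul_le_mul_of_nonneg_left h1 hlam
  linarith
end

section
/- Let N, L ∈ ℕ, samples (x_ℓ, y_ℓ) ∈ ℝ^N × ℝ, λ ≥ 0, C ⊆ ℝ^{N×N}, and ‖·‖ any norm on ℝ^N. If (v̂, Θ̂) ∈ ℝ^N × C is a global minimizer of F(v, Θ) + (λ/2)‖Θ‖_1 + λ Σ_{i=1}^N max{|v_i|, ‖Θ_{i,·}‖}, then setting v̂⁺_i = max{ max{0, v̂_i}, (‖Θ̂_{i,·}‖ + v̂_i)/2 } and v̂⁻ = v̂⁺ − v̂ produces a triple (v̂⁺, v̂⁻, Θ̂) that is a global minimizer of F(v⁺ − v⁻, Θ) + (λ/2)‖Θ‖_1 +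 λ Σ_{i=1}^N (v⁺_i + v⁻_i) over the set of (v⁺, v⁻, Θ) with v⁺, v⁻ componentwise nonnegative, Θ ∈ C, and ‖Θ_{i,·}‖ ≤ v⁺_i + v⁻_i for all i. -/
lemma split_key (a n : ℝ) (hn : 0 ≤ n) :
    2 * max (max 0 a) ((n + a) / 2) - a = max |a| n := by
  rcases le_total a 0 with ha | ha
  · rw [max_eq_left ha]
    rcases le_total n (-a) with h2 | h2
    · rw [max_eq_left (by linarith : (n + a) / 2 ≤ 0), abs_of_nonpos ha,
        max_eq_left (by linarith : n ≤ -a)]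
      ring
    · rw [max_eq_right (by linarith : (0 : ℝ) ≤ (n + a) / 2), abs_of_nonpos ha,
        max_eq_right (by linarith : -a ≤ n)]
      ring
  · rw [max_eq_right ha]
    rcases le_total n a with h2 | h2
    · rw [max_eq_left (by linarith : (n + a) / 2 ≤ a), abs_of_nonneg ha, max_eq_left h2]
      ring
    · rw [max_eq_right (by linarith : a ≤ (n + a) / 2), abs_of_nonneg ha, max_eq_right h2]
      ring

/-- Converse minimizer-transfer direction of Proposition 1: if `(v̂, Θ̂)` is a global
minimizer of the original hierarchical-interaction problem, then the explicit split
`v̂⁺ᵢ = max { max{0, v̂ᵢ}, (‖Θ̂ᵢ‖ + v̂ᵢ)/2 }`, `v̂⁻ = v̂⁺ − v̂` gives a global minimizer of the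
epigraphical formulation. -/
theorem stmt_5 (N L : ℕ) (x : Fin L → Fin N → ℝ) (y : Fin L → ℝ)
    (lam : ℝ) (hlam : 0 ≤ lam) (C : Set (Fin N → Fin N → ℝ))
    (nrm : Seminorm ℝ (Fin N → ℝ)) (hdef : ∀ u, nrm u = 0 → u = 0)
    (vh : Fin N → ℝ) (Θh : Fin N → Fin N → ℝ) (hΘ : Θh ∈ C)
    (hmin : ∀ (v : Fin N → ℝ) (Θ : Fin N → Fin N → ℝ), Θ ∈ C →
      lsFit N L x y vh Θh + (lam / 2) * (∑ i, ∑ j, |Θh i j|) +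
          lam * ∑ i, max |vh i| (nrm (Θh i)) ≤
        lsFit N L x y v Θ + (lam / 2) * (∑ i, ∑ j, |Θ i j|) +
          lam * ∑ i, max |v i| (nrm (Θ i)))
    (vph vmh : Fin N → ℝ)
    (hvph : ∀ i, vph i = max (max 0 (vh i)) ((nrm (Θh i) + vh i) / 2))
    (hvmh : ∀ i, vmh i = vph i - vh i) :
    (∀ i, 0 ≤ vph i) ∧ (∀ i, 0 ≤ vmh i) ∧ Θh ∈ C ∧
    (∀ i, nrm (Θh i) ≤ vph i + vmh i) ∧
    ∀ (vp vm : Fin N → ℝ) (Θ : Fin N → Fin N → ℝ),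
      (∀ i, 0 ≤ vp i) → (∀ i, 0 ≤ vm i) → Θ ∈ C → (∀ i, nrm (Θ i) ≤ vp i + vm i) →
      lsFit N L x y (fun i => vph i - vmh i) Θh + (lam / 2) * (∑ i, ∑ j, |Θh i j|) +
          lam * ∑ i, (vph i + vmh i) ≤
        lsFit N L x y (fun i => vp i - vm i) Θ + (lam / 2) * (∑ i, ∑ j, |Θ i j|) +
          lam * ∑ i, (vp i + vm i) := by
  have key : ∀ i, vph i + vmh i = max |vh i| (nrm (Θh i)) := by
    intro i
    have hn := apply_nonneg nrm (Θh i)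
    have := split_key (vh i) (nrm (Θh i)) hn
    rw [hvmh i, hvph i]
    linarith [this, hvph i]
  have hp : ∀ i, 0 ≤ vph i := fun i => by
    rw [hvph i]; exact le_trans (le_max_left 0 _) (le_max_left _ _)
  have hm : ∀ i, 0 ≤ vmh i := fun i => by
    rw [hvmh i, hvph i]
    have : vh i ≤ max 0 (vh i) := le_max_right _ _
    linarith [le_max_left (max 0 (vh i)) ((nrm (Θh i) + vh i) / 2)]
  refine ⟨hp, hm, hΘ, fun i => ?_, ?_⟩
  · rw [key i]; exact le_max_right _ _
  · intro vp vm Θ hvp hvm hΘC hle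
    have hdiff : (fun i => vph i - vmh i) = vh := by
      funext i; rw [hvmh i]; ring
    have hsum : ∑ i, (vph i + vmh i) = ∑ i, max |vh i| (nrm (Θh i)) :=
      Finset.sum_congr rfl fun i _ => key i
    rw [hdiff, hsum]
    refine le_trans (hmin (fun i => vp i - vm i) Θ hΘC) ?_
    have : ∀ i, max |vp i - vm i| (nrm (Θ i)) ≤ vp i + vm i := fun i => by
      refine max_le (abs_le.2 ⟨by linarith [hvp i, hvm i], by linarith [hvp i, hvm i]⟩)
        (hle i)
    gcongr with i
    exact this i
end

section
/- Let N ∈ ℕ and let E_∞ = {(ω⁺, ω⁻, u) ∈ ℝ × ℝ × ℝ^N : ‖u‖_∞ ≤ ω⁺ + ω⁻}. Let (ω⁺, ω⁻, u) ∈ ℝ × ℝ × ℝ^N and let ν be a nondecreasing rearrangement of (|u_1|, …, |u_N|). Suppose n̄ ∈ {1, …, N} is such that, setting η⁻ = (ω⁻ − (N − n̄ + 1)(ω⁺ − ω⁻) + Σ_{i=n̄}^N ν_i) / (1 + 2(N − n̄ + 1)) and η⁺ = η⁻ + ω⁺ − ω⁻, one has 0 ≤ η⁺ + η⁻ ≤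 ν_{n̄} and (if n̄ ≥ 2) ν_{n̄−1} < η⁺ + η⁻. Then the Euclidean projection of (ω⁺, ω⁻, u) onto E_∞ is (η⁺, η⁻, p) with p_i = min{max{u_i, −(η⁺ + η⁻)}, η⁺ + η⁻} for every i. -/
set_option maxHeartbeats 1000000


/-- Squared Euclidean distance on `ℝ × ℝ × ℝ^N`. -/
noncomputable def dsq (N : ℕ) (z z' : ℝ × ℝ × (Fin N → ℝ)) : ℝ :=
  (z.1 - z'.1) ^ 2 + (z.2.1 - z'.2.1) ^ 2 + ∑ i, (z.2.2 i - z'.2.2 i) ^ 2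

/-- `E_∞ = {(ω⁺, ω⁻, u) : ‖u‖_∞ ≤ ω⁺ + ω⁻}` (the `Pi` norm on `Fin N → ℝ` is the sup norm). -/
def Einf (N : ℕ) : Set (ℝ × ℝ × (Fin N → ℝ)) := {z | ‖z.2.2‖ ≤ z.1 + z.2.1}

/-- Proposition 2: closed-form Euclidean projection onto `E_∞`. Here `ν` is a
nondecreasing rearrangement of `(|u₁|, …, |u_N|)` and `nbar : Fin N` is the 0-based
version of the 1-based index `n̄ ∈ {1, …, N}` (so `N − n̄ + 1 = N − nbar`). -/
theorem stmt_8 (N : ℕ) (ωp ωm : ℝ) (u ν : Fin N → ℝ) (σ : Equiv.Perm (Fin N))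
    (hperm : ∀ i, ν i = |u (σ i)|) (hmono : Monotone ν)
    (nbar : Fin N) (ηp ηm : ℝ)
    (hηm : ηm = (ωm - ((N : ℝ) - ((nbar : ℕ) : ℝ)) * (ωp - ωm) +
        ∑ i ∈ Finset.univ.filter (fun i => nbar ≤ i), ν i) /
        (1 + 2 * ((N : ℝ) - ((nbar : ℕ) : ℝ))))
    (hηp : ηp = ηm + ωp - ωm)
    (h0 : 0 ≤ ηp + ηm) (h1 : ηp + ηm ≤ ν nbar)
    (h2 : ∀ j : Fin N, (j : ℕ) + 1 = (nbar : ℕ) → ν j < ηp + ηm) :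
    (ηp, ηm, fun i => min (max (u i) (-(ηp + ηm))) (ηp + ηm)) ∈ Einf N ∧
    ∀ z ∈ Einf N,
      dsq N (ωp, ωm, u) (ηp, ηm, fun i => min (max (u i) (-(ηp + ηm))) (ηp + ηm)) ≤
        dsq N (ωp, ωm, u) z := by
  set t : ℝ := ηp + ηm with ht_def
  set p : Fin N → ℝ := fun i => min (max (u i) (-t)) t with hp_def
  have hpbound : ∀ i, |p i| ≤ t := by
    intro i
    rw [abs_le]
    refine ⟨le_min (le_trans (by linarith) (le_max_right _ _)) (by linarith), min_le_right _ _⟩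
  -- membership
  have hmem : (ηp, ηm, p) ∈ Einf N := by
    simp only [Einf, Set.mem_setOf_eq]
    calc ‖p‖ ≤ t := by
            refine (pi_norm_le_iff_of_nonneg h0).2 fun i => ?_
            simpa [Real.norm_eq_abs] using hpbound i
      _ = ηp + ηm := rfl
  refine ⟨hmem, ?_⟩
  -- ν below nbar is < t, at or above nbar is ≥ t
  have hνlt : ∀ i : Fin N, (i : ℕ) < (nbar : ℕ) → ν i < t := by
    intro i hi
    have hnpos : 0 < (nbar : ℕ) := Nat.pos_of_ne_zero (by omega)
    have hj : (nbar : ℕ) - 1 < N := by omega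
    have hle : ν i ≤ ν ⟨(nbar : ℕ) - 1, hj⟩ := hmono (by simp [Fin.le_def]; omega)
    exact hle.trans_lt (h2 ⟨(nbar : ℕ) - 1, hj⟩ (by simp; omega))
  have hνge : ∀ i : Fin N, nbar ≤ i → t ≤ ν i := fun i hi => h1.trans (hmono hi)
  -- key identity: (ωm - ηm) + ∑ max(|u i| - t, 0) = 0
  have hfilter : Finset.univ.filter (fun i : Fin N => nbar ≤ i) = Finset.Ici nbar := by
    ext i
    rw [Finset.mem_filter, Finset.mem_Ici]
    exact ⟨fun h => h.2, fun h => ⟨Finset.mem_univ _, h⟩⟩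
  have hcard : (Finset.univ.filter (fun i : Fin N => nbar ≤ i)).card = N - (nbar : ℕ) := by
    rw [hfilter, Fin.card_Ici]
  have hsum1 : ∑ i, max (|u i| - t) 0 = ∑ i, max (ν i - t) 0 := by
    rw [← Equiv.sum_comp σ (fun i => max (|u i| - t) 0)]
    exact Finset.sum_congr rfl fun i _ => by rw [hperm i]
  have hsum2 : ∑ i, max (ν i - t) 0 =
      ∑ i ∈ Finset.univ.filter (fun i : Fin N => nbar ≤ i), (ν i - t) := by
    rw [← Finset.sum_filter_add_sum_filter_not Finset.univ (fun i : Fin N => nbar ≤ i)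
      (fun i => max (ν i - t) 0)]
    have e1 : ∑ i ∈ Finset.univ.filter (fun i : Fin N => nbar ≤ i), max (ν i - t) 0 =
        ∑ i ∈ Finset.univ.filter (fun i : Fin N => nbar ≤ i), (ν i - t) := by
      refine Finset.sum_congr rfl fun i hi => ?_
      have := hνge i (Finset.mem_filter.1 hi).2
      exact max_eq_left (by linarith)
    have e2 : ∑ i ∈ Finset.univ.filter (fun i : Fin N => ¬ nbar ≤ i), max (ν i - t) 0 = 0 := by
      refine Finset.sum_eq_zero fun i hi => ?_
      have hi' : (i : ℕ) < (nbar : ℕ) := by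
        have := (Finset.mem_filter.1 hi).2
        exact Fin.lt_def.1 (lt_of_not_ge this)
      have := hνlt i hi'
      exact max_eq_right (by linarith)
    rw [e1, e2, add_zero]
  have hsum3 : ∑ i ∈ Finset.univ.filter (fun i : Fin N => nbar ≤ i), (ν i - t) =
      (∑ i ∈ Finset.univ.filter (fun i : Fin N => nbar ≤ i), ν i)
        - ((N : ℝ) - ((nbar : ℕ) : ℝ)) * t := by
    rw [Finset.sum_sub_distrib, Finset.sum_const, hcard, nsmul_eq_mul]
    have : ((N - (nbar : ℕ) : ℕ) : ℝ) = (N : ℝ) - ((nbar : ℕ) : ℝ) := by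
      have := nbar.isLt; push_cast [Nat.cast_sub (le_of_lt this)]; ring
    rw [this]
  have hkey : (ωm - ηm) + ∑ i, max (|u i| - t) 0 = 0 := by
    rw [hsum1, hsum2, hsum3]
    have hk : (0 : ℝ) ≤ (N : ℝ) - ((nbar : ℕ) : ℝ) := by
      have := nbar.isLt
      have : ((nbar : ℕ) : ℝ) ≤ (N : ℝ) := by exact_mod_cast le_of_lt this
      linarith
    have hden : (1 + 2 * ((N : ℝ) - ((nbar : ℕ) : ℝ))) ≠ 0 := by positivity
    have hηm' := hηm
    field_simp at hηm'
    have ht' : t = 2 * ηm + ωp - ωm := by rw [ht_def, hηp]; ring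
    rw [ht']
    linarith [hηm']
  -- main inequality
  intro z hz
  obtain ⟨z1, z2, z3⟩ := z
  simp only [Einf, Set.mem_setOf_eq] at hz
  have hz3 : ∀ i, |z3 i| ≤ z1 + z2 := fun i =>
    le_trans (by simpa [Real.norm_eq_abs] using norm_le_pi_norm z3 i) hz
  -- coordinatewise bound
  have coord : ∀ i, (max (|u i| - t) 0) * (t - (z1 + z2)) ≤ (u i - p i) * (p i - z3 i) := by
    intro i
    have hz3i := hz3 i
    rw [abs_le] at hz3i
    rcases le_total (u i) t with hut | hut
    · rcases le_total (-t) (u i) with htu | htu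
      · have hpi : p i = u i := by
          simp only [hp_def]; rw [max_eq_left htu, min_eq_left hut]
        have habs : |u i| ≤ t := abs_le.2 ⟨htu, hut⟩
        rw [hpi, max_eq_right (by linarith)]
        simp
      · -- u i ≤ -t
        have hpi : p i = -t := by
          simp only [hp_def]; rw [max_eq_right htu, min_eq_left (by linarith)]
        have habs : |u i| = -(u i) := abs_of_nonpos (by linarith)
        rw [hpi, max_eq_left (by linarith [habs]), habs]
        nlinarith [hz3i.1, hz3i.2]
    · -- t ≤ u i
      have hpi : p i = t := by
        simp only [hp_def]; rw [max_eq_left (by linarith), min_eq_right hut]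
      have habs : |u i| = u i := abs_of_nonneg (by linarith)
      rw [hpi, max_eq_left (by linarith [habs]), habs]
      nlinarith [hz3i.1, hz3i.2]
  -- expansion of dsq
  have hexp : dsq N (ωp, ωm, u) (z1, z2, z3) =
      dsq N (ωp, ωm, u) (ηp, ηm, p) + dsq N (ηp, ηm, p) (z1, z2, z3) +
      2 * ((ωp - ηp) * (ηp - z1) + (ωm - ηm) * (ηm - z2) +
        ∑ i, (u i - p i) * (p i - z3 i)) := by
    have hsum : ∑ i, (u i - z3 i) ^ 2 =
        ∑ i, ((u i - p i) ^ 2 + ((p i - z3 i) ^ 2 + 2 * ((u i - p i) * (p i - z3 i)))) :=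
      Finset.sum_congr rfl fun i _ => by ring
    simp only [dsq]
    rw [hsum, Finset.sum_add_distrib, Finset.sum_add_distrib, ← Finset.mul_sum]
    ring
  have hinner : 0 ≤ (ωp - ηp) * (ηp - z1) + (ωm - ηm) * (ηm - z2) +
      ∑ i, (u i - p i) * (p i - z3 i) := by
    have hsumge : (∑ i, max (|u i| - t) 0) * (t - (z1 + z2)) ≤
        ∑ i, (u i - p i) * (p i - z3 i) := by
      rw [Finset.sum_mul]
      exact Finset.sum_le_sum fun i _ => coord i
    have ha : ωp - ηp = ωm - ηm := by rw [hηp]; ring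
    have hC : ∑ i, max (|u i| - t) 0 = -(ωm - ηm) := by linarith [hkey]
    rw [hC] at hsumge
    have : (ωp - ηp) * (ηp - z1) + (ωm - ηm) * (ηm - z2) =
        (ωm - ηm) * (t - (z1 + z2)) := by rw [ha, ht_def]; ring
    nlinarith [hsumge]
  have hdsqnn : 0 ≤ dsq N (ηp, ηm, p) (z1, z2, z3) := by
    simp only [dsq]
    have : 0 ≤ ∑ i, (p i - z3 i) ^ 2 := Finset.sum_nonneg fun i _ => sq_nonneg _
    positivity
  have : dsq N (ωp, ωm, u) (ηp, ηm, p) ≤ dsq N (ωp, ωm, u) (z1, z2, z3) := by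
    rw [hexp]; linarith
  simpa [hp_def, ht_def] using this
end

section
/- Let N ∈ ℕ, let E_∞ = {(ω⁺, ω⁻, u) ∈ ℝ × ℝ × ℝ^N : ‖u‖_∞ ≤ ω⁺ + ω⁻}, and let (ω⁺, ω⁻, u) ∈ ℝ × ℝ × ℝ^N. Define g(a, b) = (a − ω⁺)² + (b − ω⁻)² + Σ_{i=1}^N (max{|u_i| − a − b, 0})². If (η⁺, η⁻) minimizes g over {(a, b) ∈ ℝ² : a + b ≥ 0}, then the Euclidean projection of (ω⁺, ω⁻, u) onto E_∞ is (η⁺, η⁻, p) with p_i = min{max{u_i, −(η⁺ + η⁻)}, η⁺ + η⁻} for every i. -/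
lemma clamp_sq (s x : ℝ) (hs : 0 ≤ s) :
    (x - min (max x (-s)) s) ^ 2 = (max (|x| - s) 0) ^ 2 := by
  rcases le_total x s with h1 | h1
  · rcases le_total (-s) x with h2 | h2
    · rw [max_eq_left h2, min_eq_left h1]
      have : |x| ≤ s := abs_le.mpr ⟨h2, h1⟩
      rw [max_eq_right (by linarith)]
      ring
    · rw [max_eq_right h2, min_eq_left (by linarith)]
      have hx : |x| = -x := abs_of_nonpos (by linarith)
      rw [hx, max_eq_left (by linarith)]
      ring
  · rw [max_eq_left (by linarith), min_eq_right h1]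
    have hx : |x| = x := abs_of_nonneg (by linarith)
    rw [hx, max_eq_left (by linarith)]

/-- Dimension-reduction step in the proof of Proposition 2: if `(η⁺, η⁻)` minimizes
`g(a, b) = (a − ω⁺)² + (b − ω⁻)² + ∑ (max{|uᵢ| − a − b, 0})²` over the half-plane
`a + b ≥ 0`, then the Euclidean projection of `(ω⁺, ω⁻, u)` onto `E_∞` is
`(η⁺, η⁻, p)` with `pᵢ` the clamp of `uᵢ` to `[−(η⁺ + η⁻), η⁺ + η⁻]`. -/
theorem stmt_9 (N : ℕ) (ωp ωm : ℝ) (u : Fin N → ℝ) (ηp ηm : ℝ)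
    (hfeas : 0 ≤ ηp + ηm)
    (hmin : ∀ a b : ℝ, 0 ≤ a + b →
      (ηp - ωp) ^ 2 + (ηm - ωm) ^ 2 + ∑ i, (max (|u i| - ηp - ηm) 0) ^ 2 ≤
        (a - ωp) ^ 2 + (b - ωm) ^ 2 + ∑ i, (max (|u i| - a - b) 0) ^ 2) :
    (ηp, ηm, fun i => min (max (u i) (-(ηp + ηm))) (ηp + ηm)) ∈ Einf N ∧
    ∀ z ∈ Einf N,
      dsq N (ωp, ωm, u) (ηp, ηm, fun i => min (max (u i) (-(ηp + ηm))) (ηp + ηm)) ≤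
        dsq N (ωp, ωm, u) z := by
  constructor
  · show ‖_‖ ≤ ηp + ηm
    apply pi_norm_le_iff_of_nonneg hfeas |>.mpr
    intro i
    rw [Real.norm_eq_abs, abs_le]
    exact ⟨le_min (le_max_right _ _) (by linarith), min_le_right _ _⟩
  · rintro ⟨a, b, v⟩ hz
    have hab : 0 ≤ a + b := le_trans (norm_nonneg v) hz
    have key : dsq N (ωp, ωm, u) (ηp, ηm, fun i => min (max (u i) (-(ηp + ηm))) (ηp + ηm))
        = (ηp - ωp) ^ 2 + (ηm - ωm) ^ 2 + ∑ i, (max (|u i| - ηp - ηm) 0) ^ 2 := by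
      simp only [dsq]
      rw [show (ωp - ηp)^2 = (ηp - ωp)^2 by ring, show (ωm - ηm)^2 = (ηm - ωm)^2 by ring]
      congr 1
      apply Finset.sum_congr rfl
      intro i _
      have := clamp_sq (ηp + ηm) (u i) hfeas
      rw [this]; ring_nf
    rw [key]
    refine le_trans (hmin a b hab) ?_
    simp only [dsq]
    rw [show (ωp - a)^2 = (a - ωp)^2 by ring, show (ωm - b)^2 = (b - ωm)^2 by ring]
    refine add_le_add (le_refl _) (Finset.sum_le_sum fun i _ => ?_)
    have hvi : |v i| ≤ a + b := le_trans (norm_le_pi_norm v i) hz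
    have h1 : |u i| - |v i| ≤ |u i - v i| := abs_sub_abs_le_abs_sub _ _
    have h2 : max (|u i| - a - b) 0 ≤ |u i - v i| :=
      max_le (by linarith) (abs_nonneg _)
    calc (max (|u i| - a - b) 0) ^ 2 ≤ |u i - v i| ^ 2 := by
          exact pow_le_pow_left₀ (le_max_right _ _) h2 2
      _ = (u i - v i) ^ 2 := sq_abs _
end

section
/- Let N ∈ ℕ and let E_1^+ = {(ω⁺, ω⁻, u) ∈ ℝ × ℝ × ℝ^N : Σ_{i=1}^N u_i = ω⁺ + ω⁻ and u_i ≥ 0 for all i}. Let (ω⁺, ω⁻, u) ∈ ℝ × ℝ × ℝ^N, let μ be a nonincreasing rearrangement of (u_1, …, u_N), and suppose ñ ∈ {1, …, N} is such that, setting η⁻ = (Σ_{i=1}^{ñ} μ_i − ω⁺ + (ñ + 1) ω⁻) / (ñ + 2), η⁺ = η⁻ + ω⁺ − ω⁻, and α = (Σ_{i=1}^{ñ} μ_i − (η⁺ + η⁻)) / ñ, one has μ_ñ > α and, if ñ < N, μ_{ñ+1} ≤ α. Then the Euclidean projection of (ω⁺, ω⁻, u) onto E_1^+ is (η⁺, η⁻,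 p) with p_i = max{u_i − α, 0} for every i. -/
/-- `E_1^+ = {(ω⁺, ω⁻, u) : ∑ᵢ uᵢ = ω⁺ + ω⁻ and u ≥ 0}`. -/
def E1plus (N : ℕ) : Set (ℝ × ℝ × (Fin N → ℝ)) :=
  {z | (∑ i, z.2.2 i) = z.1 + z.2.1 ∧ ∀ i, 0 ≤ z.2.2 i}

private lemma key_sq (a b c : ℝ) :
    (a - b) ^ 2 + 2 * ((a - b) * (b - c)) ≤ (a - c) ^ 2 := by
  nlinarith [sq_nonneg (b - c)]

/-- Proposition 3: closed-form Euclidean projection onto `E_1^+`. Here `μ` is a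
nonincreasing rearrangement of `(u₁, …, u_N)` and `nt : Fin N` is the 0-based version
of the 1-based index `ñ ∈ {1, …, N}` (so `ñ = nt + 1`, the partial sum
`∑_{i=1}^{ñ} μᵢ` is the sum over `i ≤ nt`, `ñ + 1 = nt + 2` and `ñ + 2 = nt + 3`). -/
theorem stmt_12 (N : ℕ) (ωp ωm : ℝ) (u μ : Fin N → ℝ) (σ : Equiv.Perm (Fin N))
    (hperm : ∀ i, μ i = u (σ i)) (hmono : Antitone μ)
    (nt : Fin N) (ηp ηm α : ℝ)
    (hηm : ηm = ((∑ i ∈ Finset.univ.filter (fun i => i ≤ nt), μ i) - ωp +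
        (((nt : ℕ) : ℝ) + 2) * ωm) / (((nt : ℕ) : ℝ) + 3))
    (hηp : ηp = ηm + ωp - ωm)
    (hα : α = ((∑ i ∈ Finset.univ.filter (fun i => i ≤ nt), μ i) - (ηp + ηm)) /
        (((nt : ℕ) : ℝ) + 1))
    (h1 : μ nt > α)
    (h2 : ∀ j : Fin N, (j : ℕ) = (nt : ℕ) + 1 → μ j ≤ α) :
    (ηp, ηm, fun i => max (u i - α) 0) ∈ E1plus N ∧
    ∀ z ∈ E1plus N,
      dsq N (ωp, ωm, u) (ηp, ηm, fun i => max (u i - α) 0) ≤ dsq N (ωp, ωm, u) z := by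
  set T : ℝ := ((nt : ℕ) : ℝ) with hT
  set S : ℝ := ∑ i ∈ Finset.univ.filter (fun i => i ≤ nt), μ i with hS
  have hT0 : (0 : ℝ) ≤ T := Nat.cast_nonneg _
  have hT1 : (0 : ℝ) < T + 1 := by linarith
  have hT3 : (0 : ℝ) < T + 3 := by linarith
  -- linear equations
  have e1 : ηm * (T + 3) = S - ωp + (T + 2) * ωm := by
    rw [hηm]; field_simp
  have e2 : α * (T + 1) = S - (ηp + ηm) := by
    rw [hα]; field_simp
  -- key identities ηm = ωm + α, ηp = ωp + α
  have hzm : (ηm - ωm - α) * (T + 1) = 0 := by linear_combination e1 - e2 + hηp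
  have hm : ηm = ωm + α := by
    rcases mul_eq_zero.1 hzm with h | h
    · linarith
    · linarith
  have hp : ηp = ωp + α := by linarith
  -- the set of indices where μ exceeds α
  have hmuα : ∀ i : Fin N, if i ≤ nt then α < μ i else μ i ≤ α := by
    intro i
    by_cases hi : i ≤ nt
    · simp only [hi, if_true]
      exact lt_of_lt_of_le h1 (hmono hi)
    · simp only [hi, if_false]
      have hlt : nt < i := lt_of_not_ge hi
      have hval : (nt : ℕ) + 1 ≤ (i : ℕ) := hlt
      have hjN : (nt : ℕ) + 1 < N := lt_of_le_of_lt hval i.isLt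
      set j : Fin N := ⟨(nt : ℕ) + 1, hjN⟩ with hj
      have hji : j ≤ i := hval
      exact le_trans (hmono hji) (h2 j rfl)
  -- sum of the projection coordinates
  have hcard : (Finset.univ.filter (fun i => i ≤ nt)).card = (nt : ℕ) + 1 := by
    have : Finset.univ.filter (fun i => i ≤ nt) = Finset.Iic nt := by
      ext i; simp
    rw [this, Fin.card_Iic]
  have hSum : ∑ i, max (u i - α) 0 = ηp + ηm := by
    have h1' : ∑ i, max (u i - α) 0 = ∑ i, max (μ i - α) 0 := by
      rw [← Equiv.sum_comp σ (fun i => max (u i - α) 0)]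
      exact Finset.sum_congr rfl (fun i _ => by rw [hperm i])
    have h2' : ∑ i, max (μ i - α) 0 =
        ∑ i ∈ Finset.univ.filter (fun i => i ≤ nt), (μ i - α) := by
      rw [Finset.sum_filter]
      refine Finset.sum_congr rfl (fun i _ => ?_)
      have := hmuα i
      by_cases hi : i ≤ nt
      · simp only [hi, if_true] at this ⊢
        exact max_eq_left (by linarith)
      · simp only [hi, if_false] at this ⊢
        exact max_eq_right (by linarith)
    have h3' : ∑ i ∈ Finset.univ.filter (fun i => i ≤ nt), (μ i - α)
        = S - (T + 1) * α := by
      rw [Finset.sum_sub_distrib, Finset.sum_const, hcard]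
      ring
    rw [h1', h2', h3']
    linear_combination -e2
  refine ⟨⟨by simpa using hSum, fun i => le_max_right _ _⟩, ?_⟩
  -- optimality
  rintro ⟨z1, z2, v⟩ ⟨hz1, hz2⟩
  simp only at hz1 hz2
  set p : Fin N → ℝ := fun i => max (u i - α) 0 with hpdef
  have hterm : ∀ i, (u i - p i) * (p i - v i) ≥ α * (p i - v i) := by
    intro i
    rcases le_or_gt (u i - α) 0 with h | h
    · have hpi : p i = 0 := max_eq_right h
      rw [hpi]
      simp only [sub_zero, zero_sub]
      have hui : u i ≤ α := by linarith
      have hvi : 0 ≤ v i := hz2 i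
      nlinarith
    · have hpi : p i = u i - α := max_eq_left h.le
      exact ge_of_eq (by rw [hpi]; ring)
  have hsum2 : ∑ i, (u i - p i) * (p i - v i) ≥ α * ((ηp + ηm) - (z1 + z2)) := by
    calc ∑ i, (u i - p i) * (p i - v i) ≥ ∑ i, α * (p i - v i) :=
          Finset.sum_le_sum (fun i _ => hterm i)
      _ = α * ((∑ i, p i) - ∑ i, v i) := by
          rw [← Finset.mul_sum, Finset.sum_sub_distrib]
      _ = α * ((ηp + ηm) - (z1 + z2)) := by rw [hSum, hz1]
  -- the variational inequality
  have hvar : (ωp - ηp) * (ηp - z1) + (ωm - ηm) * (ηm - z2) +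
      ∑ i, (u i - p i) * (p i - v i) ≥ 0 := by
    have : (ωp - ηp) * (ηp - z1) + (ωm - ηm) * (ηm - z2) +
        α * ((ηp + ηm) - (z1 + z2)) = 0 := by
      rw [hp, hm]; ring
    linarith
  -- conclude
  simp only [dsq]
  have hsq : ∑ i, (u i - p i) ^ 2 + 2 * ∑ i, (u i - p i) * (p i - v i)
      ≤ ∑ i, (u i - v i) ^ 2 := by
    rw [Finset.mul_sum, ← Finset.sum_add_distrib]
    exact Finset.sum_le_sum (fun i _ => key_sq (u i) (p i) (v i))
  have k1 := key_sq ωp ηp z1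
  have k2 := key_sq ωm ηm z2
  linarith
end

section
/- Let N ∈ ℕ, let E_1 = {(ω⁺, ω⁻, u) ∈ ℝ × ℝ × ℝ^N : ‖u‖_1 ≤ ω⁺ + ω⁻} and E_1^+ = {(ω⁺, ω⁻, u) ∈ ℝ × ℝ × ℝ^N : Σ_i u_i = ω⁺ + ω⁻ and u_i ≥ 0 for all i}. Let (u⁺, u⁻, w) ∈ ℝ × ℝ × ℝ^N with w_i ≠ 0 for all i and ‖w‖_1 > u⁺ + u⁻. If (v⁺, v⁻, p̂) is the Euclidean projection of (u⁺, u⁻, (|w_1|, …, |w_N|)) onto E_1^+, then the Euclidean projection of (u⁺, u⁻, w) onto E_1 is (v⁺, v⁻, p) with p_i = sign(w_i) · p̂_i for every i. -/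
/-- `E_1 = {(ω⁺, ω⁻, u) : ‖u‖₁ ≤ ω⁺ + ω⁻}`. -/
def E1 (N : ℕ) : Set (ℝ × ℝ × (Fin N → ℝ)) := {z | (∑ i, |z.2.2 i|) ≤ z.1 + z.2.1}

/-- Proposition 4: if `(u⁺, u⁻, w)` lies strictly outside `E_1` and all `wᵢ ≠ 0`, its
Euclidean projection onto `E_1` is obtained by projecting `(u⁺, u⁻, |w|)` onto `E_1^+`
and restoring the signs. -/
theorem stmt_14 (N : ℕ) (up um : ℝ) (w : Fin N → ℝ)
    (hw : ∀ i, w i ≠ 0) (hout : ∑ i, |w i| > up + um)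
    (vp vm : ℝ) (phat : Fin N → ℝ)
    (hmem : (vp, vm, phat) ∈ E1plus N)
    (hproj : ∀ z ∈ E1plus N,
      dsq N (up, um, fun i => |w i|) (vp, vm, phat) ≤ dsq N (up, um, fun i => |w i|) z) :
    (vp, vm, fun i => Real.sign (w i) * phat i) ∈ E1 N ∧
    ∀ z ∈ E1 N,
      dsq N (up, um, w) (vp, vm, fun i => Real.sign (w i) * phat i) ≤
        dsq N (up, um, w) z := by
  obtain ⟨hsum, hpos⟩ := hmem
  have hsum' : (∑ i, phat i) = vp + vm := hsum
  have hsign : ∀ i, |Real.sign (w i)| = 1 := by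
    intro i
    rcases (hw i).lt_or_gt with h | h
    · rw [Real.sign_of_neg h]; simp
    · rw [Real.sign_of_pos h]; simp
  -- key pointwise identity
  have hkey : ∀ i, (w i - Real.sign (w i) * phat i) ^ 2 = (|w i| - phat i) ^ 2 := by
    intro i
    rcases (hw i).lt_or_gt with h | h
    · rw [Real.sign_of_neg h, abs_of_neg h]; ring
    · rw [Real.sign_of_pos h, abs_of_pos h]; ring
  have hdeq : dsq N (up, um, w) (vp, vm, fun i => Real.sign (w i) * phat i)
      = dsq N (up, um, fun i => |w i|) (vp, vm, phat) := by
    simp only [dsq]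
    congr 1
    exact Finset.sum_congr rfl fun i _ => hkey i
  constructor
  · show (∑ i, |Real.sign (w i) * phat i|) ≤ vp + vm
    have habs : ∀ i ∈ Finset.univ, |Real.sign (w i) * phat i| = phat i := by
      intro i _
      rw [abs_mul, hsign i, one_mul, abs_of_nonneg (hpos i)]
    rw [Finset.sum_congr rfl habs, hsum']
  · rintro ⟨a, b, u⟩ hz
    have hS : (∑ i, |u i|) ≤ a + b := hz
    set S := ∑ i, |u i| with hSdef
    set T := ∑ i, |w i| with hTdef
    set c := a + b - S with hcdef
    set d := T - (up + um) with hddef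
    have hc0 : 0 ≤ c := by simp only [hcdef]; linarith
    have hd0 : 0 < d := by simp only [hddef]; linarith
    have hcd : 0 < c + d := by linarith
    set lam := c / (c + d) with hlamdef
    have hl0 : 0 ≤ lam := div_nonneg hc0 hcd.le
    have hl1 : lam ≤ 1 := by rw [hlamdef, div_le_one hcd]; linarith
    have hld : lam * d = (1 - lam) * c := by
      rw [hlamdef]; field_simp; ring
    -- the intermediate point in E1plus
    set y : ℝ × ℝ × (Fin N → ℝ) :=
      (lam * up + (1 - lam) * a, lam * um + (1 - lam) * b,
        fun i => lam * |w i| + (1 - lam) * |u i|) with hydef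
    have hymem : y ∈ E1plus N := by
      constructor
      · show (∑ i, (lam * |w i| + (1 - lam) * |u i|))
          = (lam * up + (1 - lam) * a) + (lam * um + (1 - lam) * b)
        rw [Finset.sum_add_distrib, ← Finset.mul_sum, ← Finset.mul_sum,
          ← hTdef, ← hSdef]
        have : lam * (T - (up + um)) = (1 - lam) * (a + b - S) := by
          rw [← hddef, ← hcdef]; exact hld
        nlinarith [this]
      · intro i
        exact add_nonneg (mul_nonneg hl0 (abs_nonneg _))
          (mul_nonneg (by linarith) (abs_nonneg _))
    have h1 : dsq N (up, um, fun i => |w i|) (vp, vm, phat)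
        ≤ dsq N (up, um, fun i => |w i|) y := hproj y hymem
    have h2 : dsq N (up, um, fun i => |w i|) y
        = (1 - lam) ^ 2 * dsq N (up, um, fun i => |w i|) (a, b, fun i => |u i|) := by
      simp only [dsq, hydef]
      have hterm : ∀ i ∈ Finset.univ,
          (|w i| - (lam * |w i| + (1 - lam) * |u i|)) ^ 2
            = (1 - lam) ^ 2 * (|w i| - |u i|) ^ 2 := fun i _ => by ring
      rw [Finset.sum_congr rfl hterm, ← Finset.mul_sum]
      ring
    have hnn : 0 ≤ dsq N (up, um, fun i => |w i|) (a, b, fun i => |u i|) := by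
      simp only [dsq]
      positivity
    have hl2 : (1 - lam) ^ 2 ≤ 1 := by nlinarith
    have h3 : dsq N (up, um, fun i => |w i|) y
        ≤ dsq N (up, um, fun i => |w i|) (a, b, fun i => |u i|) := by
      rw [h2]; nlinarith
    have h4 : dsq N (up, um, fun i => |w i|) (a, b, fun i => |u i|)
        ≤ dsq N (up, um, w) (a, b, u) := by
      simp only [dsq]
      have : ∀ i ∈ Finset.univ, (|w i| - |u i|) ^ 2 ≤ (w i - u i) ^ 2 := by
        intro i _
        have habs := abs_abs_sub_abs_le_abs_sub (w i) (u i)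
        calc (|w i| - |u i|) ^ 2 = |(|w i| - |u i|)| ^ 2 := (sq_abs _).symm
          _ ≤ |w i - u i| ^ 2 := pow_le_pow_left₀ (abs_nonneg _) habs 2
          _ = (w i - u i) ^ 2 := sq_abs _
      exact add_le_add le_rfl (Finset.sum_le_sum this)
    rw [hdeq]
    linarith
end

section
/- Let N ∈ ℕ, let E_1 = {(ω⁺, ω⁻, u) ∈ ℝ × ℝ × ℝ^N : ‖u‖_1 ≤ ω⁺ + ω⁻}, and let (ω⁺, ω⁻, w) ∈ ℝ × ℝ × ℝ^N. Then the Euclidean projection (η⁺, η⁻, p) of (ω⁺, ω⁻, w) onto E_1 satisfies p_i · w_i ≥ 0 and |p_i| ≤ |w_i| for every i ∈ {1, …, N}. -/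
/-- Sign preservation and contraction: the Euclidean projection `(η⁺, η⁻, p)` of
`(ω⁺, ω⁻, w)` onto `E_1` satisfies `pᵢ wᵢ ≥ 0` and `|pᵢ| ≤ |wᵢ|` for every `i`. -/
theorem stmt_15 (N : ℕ) (ωp ωm : ℝ) (w : Fin N → ℝ) (ηp ηm : ℝ) (p : Fin N → ℝ)
    (hmem : (ηp, ηm, p) ∈ E1 N)
    (hproj : ∀ z ∈ E1 N, dsq N (ωp, ωm, w) (ηp, ηm, p) ≤ dsq N (ωp, ωm, w) z) :
    ∀ i, 0 ≤ p i * w i ∧ |p i| ≤ |w i| := by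
  intro i
  have key : ∀ t : ℝ, |t| ≤ |p i| → (w i - p i) ^ 2 ≤ (w i - t) ^ 2 := by
    intro t ht
    set q := Function.update p i t with hq
    have hsum : ∀ (f : Fin N → ℝ → ℝ),
        (∑ j, f j (q j)) = f i t + ∑ j ∈ Finset.univ.erase i, f j (p j) := by
      intro f
      rw [← Finset.add_sum_erase _ _ (Finset.mem_univ i)]
      congr 1
      · simp [hq]
      · exact Finset.sum_congr rfl fun j hj => by
          rw [hq, Function.update_of_ne (Finset.ne_of_mem_erase hj)]
    have hsump : ∀ (f : Fin N → ℝ → ℝ),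
        (∑ j, f j (p j)) = f i (p i) + ∑ j ∈ Finset.univ.erase i, f j (p j) :=
      fun f => (Finset.add_sum_erase _ _ (Finset.mem_univ i)).symm
    have hmemq : (ηp, ηm, q) ∈ E1 N := by
      have h1 : (∑ j, |q j|) ≤ ∑ j, |p j| := by
        rw [hsum (fun _ x => |x|), hsump (fun _ x => |x|)]
        linarith
      exact le_trans h1 hmem
    have h2 := hproj _ hmemq
    simp only [dsq] at h2
    rw [hsum (fun j x => (w j - x) ^ 2), hsump (fun j x => (w j - x) ^ 2)] at h2
    linarith
  have h0 := key 0 (by simpa using abs_nonneg (p i))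
  constructor
  · nlinarith [h0, sq_nonneg (p i)]
  · rcases le_or_gt (|w i|) (|p i|) with h | h
    · have hw := key (w i) h
      have : p i = w i := by nlinarith [sq_nonneg (w i - p i)]
      rw [this]
    · exact h.le
end

section
/- Let N ∈ ℕ, u ∈ ℝ^N, and t ≥ 0. Let p be the Euclidean projection of u onto the set Δ_t = {p ∈ ℝ^N : p_i ≥ 0 for all i, Σ_{i=1}^N p_i = t}. Then there exists α ∈ ℝ such that p_i = max{u_i − α, 0} for every i, and consequently Σ_{i=1}^N max{u_i − α, 0} = t. -/
lemma stmt_17_key (N : ℕ) (u p : Fin N → ℝ) (hpos : ∀ i, 0 ≤ p i)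
    (hproj : ∀ q : Fin N → ℝ, (∀ i, 0 ≤ q i) → (∑ i, q i = ∑ i, p i) →
      ∑ i, (p i - u i) ^ 2 ≤ ∑ i, (q i - u i) ^ 2)
    (i j : Fin N) (hij : i ≠ j) (hi : 0 < p i) : u j - p j ≤ u i - p i := by
  have main : ∀ ε : ℝ, 0 < ε → ε ≤ p i → 0 ≤ ((u i - p i) - (u j - p j)) + ε := by
    intro ε hε hεp
    set q : Fin N → ℝ := fun k => if k = i then p i - ε else if k = j then p j + ε else p k
      with hq
    have hqnn : ∀ k, 0 ≤ q k := by
      intro k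
      simp only [hq]
      split_ifs with h1 h2
      · linarith
      · linarith [hpos j]
      · exact hpos k
    have hdiff : ∀ k, q k - p k = (if k = i then -ε else 0) + (if k = j then ε else 0) := by
      intro k
      by_cases h1 : k = i
      · subst h1
        simp [hq, hij]
      · by_cases h2 : k = j
        · subst h2
          simp [hq, h1]
        · simp [hq, h1, h2]
    have hqsum : ∑ k, q k = ∑ k, p k := by
      have h0 : ∑ k, (q k - p k) = 0 := by
        rw [Finset.sum_congr rfl (fun k _ => hdiff k), Finset.sum_add_distrib,
          Finset.sum_ite_eq' Finset.univ i (fun _ => -ε),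
          Finset.sum_ite_eq' Finset.univ j (fun _ => ε)]
        simp
      have h1 : ∑ k, (q k - p k) = ∑ k, q k - ∑ k, p k := Finset.sum_sub_distrib _ _
      linarith [h1 ▸ h0]
    have h := hproj q hqnn hqsum
    have key2 : ∑ k, ((q k - u k) ^ 2 - (p k - u k) ^ 2)
        = 2 * ε * ((p j - u j) - (p i - u i)) + 2 * ε ^ 2 := by
      have hzero : ∀ k ∈ Finset.univ, k ∉ ({i, j} : Finset (Fin N)) →
          (q k - u k) ^ 2 - (p k - u k) ^ 2 = 0 := by
        intro k _ hk
        simp only [Finset.mem_insert, Finset.mem_singleton, not_or] at hk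
        simp [hq, hk.1, hk.2]
      rw [← Finset.sum_subset (Finset.subset_univ {i, j}) hzero, Finset.sum_pair hij]
      have hqi : q i = p i - ε := by simp [hq]
      have hqj : q j = p j + ε := by simp [hq, hij.symm]
      rw [hqi, hqj]; ring
    have hsub : ∑ k, ((q k - u k) ^ 2 - (p k - u k) ^ 2)
        = ∑ k, (q k - u k) ^ 2 - ∑ k, (p k - u k) ^ 2 := Finset.sum_sub_distrib _ _
    nlinarith [h, hsub ▸ key2]
  by_contra hcon
  push_neg at hcon
  have hc : (u i - p i) - (u j - p j) < 0 := by linarith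
  have hmin : 0 < min (p i) (-((u i - p i) - (u j - p j)) / 2) := lt_min hi (by linarith)
  have h1 := main _ hmin (min_le_left _ _)
  have h2 := min_le_right (p i) (-((u i - p i) - (u j - p j)) / 2)
  linarith

/-- Soft-thresholding structure of the projection onto the scaled simplex
`Δ_t = {p : p ≥ 0, ∑ᵢ pᵢ = t}`: the Euclidean projection `p` of `u` onto `Δ_t`
satisfies `pᵢ = max{uᵢ − α, 0}` for some `α ∈ ℝ`, and consequently
`∑ᵢ max{uᵢ − α, 0} = t`. -/
theorem stmt_17 (N : ℕ) (u : Fin N → ℝ) (t : ℝ) (ht : 0 ≤ t) (p : Fin N → ℝ)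
    (hpos : ∀ i, 0 ≤ p i) (hsum : ∑ i, p i = t)
    (hproj : ∀ q : Fin N → ℝ, (∀ i, 0 ≤ q i) → (∑ i, q i = t) →
      ∑ i, (p i - u i) ^ 2 ≤ ∑ i, (q i - u i) ^ 2) :
    ∃ α : ℝ, (∀ i, p i = max (u i - α) 0) ∧ ∑ i, max (u i - α) 0 = t := by
  have hproj' : ∀ q : Fin N → ℝ, (∀ i, 0 ≤ q i) → (∑ i, q i = ∑ i, p i) →
      ∑ i, (p i - u i) ^ 2 ≤ ∑ i, (q i - u i) ^ 2 := by
    intro q hq hqs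
    exact hproj q hq (hqs.trans hsum)
  by_cases hA : ∃ i, 0 < p i
  · obtain ⟨i₀, hi₀⟩ := hA
    refine ⟨u i₀ - p i₀, ?_, ?_⟩
    · intro i
      by_cases hii : i = i₀
      · subst hii
        rw [max_eq_left (by linarith)]
        ring
      · by_cases hpi : 0 < p i
        · have h1 := stmt_17_key N u p hpos hproj' i i₀ hii hpi
          have h2 := stmt_17_key N u p hpos hproj' i₀ i (fun h => hii h.symm) hi₀
          have : u i - (u i₀ - p i₀) = p i := by linarith
          rw [this, max_eq_left (le_of_lt hpi)]
        · have hpi0 : p i = 0 := le_antisymm (not_lt.mp hpi) (hpos i)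
          have h2 := stmt_17_key N u p hpos hproj' i₀ i (fun h => hii h.symm) hi₀
          rw [hpi0, max_eq_right (by linarith)]
    · rw [← hsum]
      apply Finset.sum_congr rfl
      intro i _
      by_cases hii : i = i₀
      · subst hii; rw [max_eq_left (by linarith)]; ring
      · by_cases hpi : 0 < p i
        · have h1 := stmt_17_key N u p hpos hproj' i i₀ hii hpi
          have h2 := stmt_17_key N u p hpos hproj' i₀ i (fun h => hii h.symm) hi₀
          have : u i - (u i₀ - p i₀) = p i := by linarith
          rw [this, max_eq_left (le_of_lt hpi)]
        · have hpi0 : p i = 0 := le_antisymm (not_lt.mp hpi) (hpos i)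
          have h2 := stmt_17_key N u p hpos hproj' i₀ i (fun h => hii h.symm) hi₀
          rw [hpi0, max_eq_right (by linarith)]
  · push_neg at hA
    have hp0 : ∀ i, p i = 0 := fun i => le_antisymm (hA i) (hpos i)
    have ht0 : t = 0 := by
      rw [← hsum]
      exact Finset.sum_eq_zero fun i _ => hp0 i
    refine ⟨1 + ∑ k, |u k|, ?_, ?_⟩
    · intro i
      have hle : u i ≤ ∑ k, |u k| := by
        have := Finset.single_le_sum (f := fun k => |u k|) (fun k _ => abs_nonneg _)
          (Finset.mem_univ i)
        linarith [le_abs_self (u i)]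
      rw [hp0 i, max_eq_right (by linarith)]
    · rw [ht0]
      apply Finset.sum_eq_zero
      intro i _
      have hle : u i ≤ ∑ k, |u k| := by
        have := Finset.single_le_sum (f := fun k => |u k|) (fun k _ => abs_nonneg _)
          (Finset.mem_univ i)
        linarith [le_abs_self (u i)]
      rw [max_eq_right (by linarith)]
end
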